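/- Let m ≥ 1 and let Θ be an m×m real matrix such that the kernel of the linear map x ↦ (I−Θ)x on ℝ^m has dimension 1. Let v, κ ∈ ℝ^m be nonzero with (I−Θ)ᵀv = 0, (I−Θ)κ = 0 and ⟨v, κ⟩ ≠ 0. Let 𝒯̊ ∈ ℝ^m have strictly positive entries with ⟨v, 𝒯̊⟩ ≠ 0, let 𝒱̊ ∈ ℝ^m, let w ∈ ℝ^m have nonnegative entries summing to 1 with ⟨w, κ⟩ ≠ 0, let L ∈ ℝ, let u, d ∈ ℝ with d < 0 < u, and for p ∈ (0,1) set x(p) := log(−(p·u)/((1−p)·d)). For ε ∈ ℝ set A(ε) := I − Θ + εI. Then there exists η > 0 such that for every real ε with 0 < |ε| < η: (i) A(ε) is invertible and 𝒯(ε) := wᵀA(ε)^{−1}𝒯̊ ≠ 0; (ii) there is a unique pair (p(ε), Δ(ε)) ∈ (0,1) × ℝ^m with A(ε)Δ(ε) = x(p(ε))·𝒯̊ + 𝒱̊ and ⟨w, Δ(ε)⟩ = (u−d)·L; and (iii) as ε → 0, p(ε) → p* and Δ(ε) → Δ*, where (p*, Δ*) is the unique pair in (0,1) × ℝ^m satisfying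 (I−Θ)Δ* = x(p*)·𝒯̊ + 𝒱̊ and ⟨w, Δ*⟩ = (u−d)·L. -/

import Mathlib

open Matrix Filter Topology

private noncomputable def pf (u d y : ℝ) : ℝ :=
  (Real.exp y * (-d) / u) / (1 + Real.exp y * (-d) / u)

private lemma pf_pos_aux (u d y : ℝ) (hu : 0 < u) (hd : d < 0) :
    0 < Real.exp y * (-d) / u :=
  div_pos (mul_pos (Real.exp_pos y) (by linarith)) hu

private lemma pf_mem_Ioo (u d y : ℝ) (hu : 0 < u) (hd : d < 0) :
    pf u d y ∈ Set.Ioo (0:ℝ) 1 := by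
  have hs := pf_pos_aux u d y hu hd
  unfold pf
  set s := Real.exp y * (-d) / u
  constructor
  · exact div_pos hs (by linarith)
  · rw [div_lt_one (by linarith)]; linarith

private lemma x_pf (u d y : ℝ) (hu : 0 < u) (hd : d < 0) :
    Real.log (-(pf u d y * u) / ((1 - pf u d y) * d)) = y := by
  have hu' : u ≠ 0 := hu.ne'
  have hd' : d ≠ 0 := hd.ne
  have hs := pf_pos_aux u d y hu hd
  set s := Real.exp y * (-d) / u with hsdef
  have h1s : (0:ℝ) < 1 + s := by linarith
  have hsu : s * u = Real.exp y * -d := div_mul_cancel₀ _ hu'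
  have hp : pf u d y = s / (1 + s) := rfl
  have hne : ((1:ℝ) / (1 + s)) * d ≠ 0 := by
    apply mul_ne_zero _ hd'
    positivity
  have harg : -(pf u d y * u) / ((1 - pf u d y) * d) = Real.exp y := by
    have hq : 0 < -(Real.exp y * d) + u := by nlinarith [Real.exp_pos y, mul_pos (Real.exp_pos y) (show (0:ℝ) < -d by linarith)]
    rw [hp, show 1 - s / (1 + s) = 1 / (1 + s) by field_simp; ring, div_eq_iff hne, hsdef]
    field_simp [hq.ne']
  rw [harg, Real.log_exp]

private lemma pf_x (u d p : ℝ) (hu : 0 < u) (hd : d < 0) (hp : p ∈ Set.Ioo (0:ℝ) 1) :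
    pf u d (Real.log (-(p * u) / ((1 - p) * d))) = p := by
  obtain ⟨hp0, hp1⟩ := hp
  have hu' : u ≠ 0 := hu.ne'
  have hd' : d ≠ 0 := hd.ne
  have harg : -(p * u) / ((1 - p) * d) = (p * u) / ((1 - p) * (-d)) := by
    rw [div_eq_div_iff (by nlinarith) (by nlinarith)]; ring
  have hpos : 0 < -(p * u) / ((1 - p) * d) := by
    rw [harg]
    exact div_pos (mul_pos hp0 hu) (mul_pos (by linarith) (by linarith))
  have hexp : Real.exp (Real.log (-(p * u) / ((1 - p) * d))) = -(p * u) / ((1 - p) * d) :=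
    Real.exp_log hpos
  unfold pf
  rw [hexp]
  have h1 : ((1:ℝ) - p) * d ≠ 0 := by nlinarith
  field_simp
  ring

private lemma pf_continuous (u d : ℝ) (hu : 0 < u) (hd : d < 0) :
    Continuous (pf u d) := by
  have h : ∀ y, 1 + Real.exp y * (-d) / u ≠ 0 := fun y => by
    have := pf_pos_aux u d y hu hd; linarith
  exact ((Real.continuous_exp.mul continuous_const).div_const u).div
    (continuous_const.add ((Real.continuous_exp.mul continuous_const).div_const u)) h

set_option maxHeartbeats 4000000 in
theorem stmt_16 (m : ℕ) (hm : 1 ≤ m) (Θ : Matrix (Fin m) (Fin m) ℝ)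
    (hker : Module.finrank ℝ (LinearMap.ker (1 - Θ).mulVecLin) = 1)
    (v κ : Fin m → ℝ) (hv : v ≠ 0) (hκ : κ ≠ 0)
    (hvA : (1 - Θ)ᵀ *ᵥ v = 0) (hκA : (1 - Θ) *ᵥ κ = 0) (hvκ : v ⬝ᵥ κ ≠ 0)
    (Tcirc : Fin m → ℝ) (hT : ∀ p, 0 < Tcirc p) (hvT : v ⬝ᵥ Tcirc ≠ 0)
    (Vcirc : Fin m → ℝ)
    (w : Fin m → ℝ) (hw : ∀ p, 0 ≤ w p) (hw1 : ∑ p, w p = 1) (hwκ : w ⬝ᵥ κ ≠ 0)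
    (L u d : ℝ) (hd : d < 0) (hu : 0 < u) :
    let x : ℝ → ℝ := fun p => Real.log (-(p * u) / ((1 - p) * d))
    let A : ℝ → Matrix (Fin m) (Fin m) ℝ := fun ε => 1 - Θ + ε • 1
    ∃ η : ℝ, 0 < η ∧
      (∀ ε : ℝ, 0 < |ε| → |ε| < η →
        IsUnit (A ε) ∧
        w ⬝ᵥ ((A ε)⁻¹ *ᵥ Tcirc) ≠ 0 ∧
        (∃! q : ℝ × (Fin m → ℝ), q.1 ∈ Set.Ioo (0 : ℝ) 1 ∧
          A ε *ᵥ q.2 = x q.1 • Tcirc + Vcirc ∧ w ⬝ᵥ q.2 = (u - d) * L)) ∧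
      (∃! q : ℝ × (Fin m → ℝ), q.1 ∈ Set.Ioo (0 : ℝ) 1 ∧
        (1 - Θ) *ᵥ q.2 = x q.1 • Tcirc + Vcirc ∧ w ⬝ᵥ q.2 = (u - d) * L) ∧
      ∀ (p : ℝ → ℝ) (Δ : ℝ → Fin m → ℝ),
        (∀ ε : ℝ, 0 < |ε| → |ε| < η →
          p ε ∈ Set.Ioo (0 : ℝ) 1 ∧
          A ε *ᵥ Δ ε = x (p ε) • Tcirc + Vcirc ∧ w ⬝ᵥ Δ ε = (u - d) * L) →
        ∀ (pstar : ℝ) (Δstar : Fin m → ℝ),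
          pstar ∈ Set.Ioo (0 : ℝ) 1 →
          (1 - Θ) *ᵥ Δstar = x pstar • Tcirc + Vcirc → w ⬝ᵥ Δstar = (u - d) * L →
          Tendsto p (𝓝[≠] 0) (𝓝 pstar) ∧ Tendsto Δ (𝓝[≠] 0) (𝓝 Δstar) := by
  intro x A
  have hx : ∀ q : ℝ, x q = Real.log (-(q * u) / ((1 - q) * d)) := fun _ => rfl
  have hAdef : ∀ ε : ℝ, A ε = (1 - Θ) + ε • 1 := fun _ => rfl
  set B : Matrix (Fin m) (Fin m) ℝ := 1 - Θ with hBdef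
  have hvB : v ᵥ* B = 0 := by rw [← Matrix.mulVec_transpose]; exact hvA
  set c : ℝ := v ⬝ᵥ κ with hcdef
  set τ : ℝ := v ⬝ᵥ Tcirc with hτdef
  set ν : ℝ := v ⬝ᵥ Vcirc with hνdef
  set ω : ℝ := w ⬝ᵥ κ with hωdef
  set P : Matrix (Fin m) (Fin m) ℝ := c⁻¹ • vecMulVec κ v with hPdef
  -- action of P on vectors
  have hPv : ∀ y : Fin m → ℝ, P *ᵥ y = (c⁻¹ * (v ⬝ᵥ y)) • κ := by
    intro y
    funext i
    simp only [hPdef, Matrix.mulVec, dotProduct, Matrix.smul_apply, vecMulVec_apply,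
      smul_eq_mul, Pi.smul_apply, Finset.mul_sum, Finset.sum_mul]
    exact Finset.sum_congr rfl fun j _ => by ring
  -- matrix identities
  have hBP : B * P = 0 := by
    ext i j
    have h0 : ∑ k, B i k * κ k = 0 := by
      have := congrFun hκA i
      simpa [Matrix.mulVec, dotProduct] using this
    simp only [Matrix.mul_apply, hPdef, Matrix.smul_apply, vecMulVec_apply, smul_eq_mul,
      Matrix.zero_apply]
    rw [show ∑ k, B i k * (c⁻¹ * (κ k * v j)) = (c⁻¹ * v j) * ∑ k, B i k * κ k from by
      rw [Finset.mul_sum]; exact Finset.sum_congr rfl fun k _ => by ring]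
    rw [h0, mul_zero]
  have hPB : P * B = 0 := by
    ext i j
    have h0 : ∑ k, v k * B k j = 0 := by
      have := congrFun hvB j
      simpa [Matrix.vecMul, dotProduct] using this
    simp only [Matrix.mul_apply, hPdef, Matrix.smul_apply, vecMulVec_apply, smul_eq_mul,
      Matrix.zero_apply]
    rw [show ∑ k, c⁻¹ * (κ i * v k) * B k j = (c⁻¹ * κ i) * ∑ k, v k * B k j from by
      rw [Finset.mul_sum]; exact Finset.sum_congr rfl fun k _ => by ring]
    rw [h0, mul_zero]
  have hPP : P * P = P := by
    ext i j
    simp only [Matrix.mul_apply, hPdef, Matrix.smul_apply, vecMulVec_apply, smul_eq_mul]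
    rw [show ∑ k, c⁻¹ * (κ i * v k) * (c⁻¹ * (κ k * v j)) =
        (c⁻¹ * κ i * (c⁻¹ * v j)) * ∑ k, v k * κ k from by
      rw [Finset.mul_sum]; exact Finset.sum_congr rfl fun k _ => by ring]
    rw [show ∑ k, v k * κ k = c from rfl]
    field_simp
  set Q : Matrix (Fin m) (Fin m) ℝ := 1 - P with hQdef
  set D : ℝ → Matrix (Fin m) (Fin m) ℝ := fun ε => B + P + ε • 1 with hDdef
  have hADP : ∀ ε : ℝ, A ε = D ε - P := by
    intro ε
    show B + ε • 1 = B + P + ε • 1 - P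
    abel
  have hDP : ∀ ε : ℝ, P * D ε = (1 + ε) • P := by
    intro ε
    show P * (B + P + ε • 1) = _
    rw [Matrix.mul_add, Matrix.mul_add, hPB, hPP, Matrix.mul_smul, Matrix.mul_one,
      zero_add, add_smul, one_smul]
  have hDκ : ∀ ε : ℝ, D ε *ᵥ κ = κ + ε • κ := by
    intro ε
    show (B + P + ε • 1) *ᵥ κ = _
    rw [Matrix.add_mulVec, Matrix.add_mulVec, hκA, hPv, Matrix.smul_mulVec,
      Matrix.one_mulVec, ← hcdef, inv_mul_cancel₀ hvκ, one_smul, zero_add]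
  have hD0κ : D 0 *ᵥ κ = κ := by rw [hDκ 0, zero_smul, add_zero]
  -- kernel of B is the span of κ
  have hkerB : LinearMap.ker B.mulVecLin = Submodule.span ℝ {κ} := by
    symm
    apply Submodule.eq_of_le_of_finrank_le
    · rw [Submodule.span_le, Set.singleton_subset_iff]
      exact LinearMap.mem_ker.mpr (by simpa [Matrix.mulVecLin_apply] using hκA)
    · rw [hker, finrank_span_singleton hκ]
  have hmemκ : ∀ y : Fin m → ℝ, B *ᵥ y = 0 → ∃ a : ℝ, y = a • κ := by
    intro y hy
    have hmem : y ∈ LinearMap.ker B.mulVecLin :=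
      LinearMap.mem_ker.mpr (by simpa [Matrix.mulVecLin_apply] using hy)
    rw [hkerB, Submodule.mem_span_singleton] at hmem
    obtain ⟨a, ha⟩ := hmem
    exact ⟨a, ha.symm⟩
  have hvκsmul : ∀ a : ℝ, v ⬝ᵥ (a • κ) = a * c := by
    intro a
    rw [dotProduct_smul, smul_eq_mul, ← hcdef]
  -- D 0 is invertible
  have hdet0 : IsUnit (D 0).det := by
    rw [← Matrix.isUnit_iff_isUnit_det, ← Matrix.mulVec_injective_iff_isUnit]
    have h0 : ∀ y : Fin m → ℝ, D 0 *ᵥ y = 0 → y = 0 := by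
      intro y hy
      have hy2 : B *ᵥ y + P *ᵥ y = 0 := by
        have h := hy
        rw [show D 0 = B + P from by simp [hDdef], Matrix.add_mulVec] at h
        exact h
      have hPy : P *ᵥ y = 0 := by
        have := congrArg (fun z => P *ᵥ z) hy2
        simpa [Matrix.mulVec_add, Matrix.mulVec_mulVec, hPB, hPP, Matrix.zero_mulVec] using this
      have hBy : B *ᵥ y = 0 := by
        rwa [hPy, add_zero] at hy2
      obtain ⟨a, ha⟩ := hmemκ y hBy
      rw [ha, hPv, hvκsmul, mul_comm a c, ← mul_assoc, inv_mul_cancel₀ hvκ, one_mul] at hPy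
      rcases smul_eq_zero.mp hPy with h | h
      · rw [ha, h, zero_smul]
      · exact absurd h hκ
    intro y z hyz
    have : D 0 *ᵥ (y - z) = 0 := by rw [Matrix.mulVec_sub, hyz, sub_self]
    have := h0 _ this
    exact sub_eq_zero.mp this
  -- continuity of ε ↦ D ε and its inverse
  have hDcont : Continuous D :=
    continuous_const.add (continuous_id.smul continuous_const)
  have hdetCont : Continuous fun ε : ℝ => (D ε).det := hDcont.matrix_det
  have hdet0ne : (D 0).det ≠ 0 := by
    simpa [isUnit_iff_ne_zero] using hdet0
  have hDinvCA : ContinuousAt (fun ε : ℝ => (D ε)⁻¹) 0 := by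
    have h1 : ContinuousAt Inv.inv (D 0) := by
      apply continuousAt_matrix_inv
      rw [Ring.inverse_eq_inv']
      exact continuousAt_inv₀ hdet0ne
    exact h1.comp hDcont.continuousAt
  -- scalar auxiliary functions
  set rT : ℝ → ℝ := fun ε => w ⬝ᵥ ((D ε)⁻¹ *ᵥ (Q *ᵥ Tcirc)) with hrTdef
  set rV : ℝ → ℝ := fun ε => w ⬝ᵥ ((D ε)⁻¹ *ᵥ (Q *ᵥ Vcirc)) with hrVdef
  have hrTCA : ContinuousAt rT 0 := by
    have h2 : Continuous fun M : Matrix (Fin m) (Fin m) ℝ => w ⬝ᵥ (M *ᵥ (Q *ᵥ Tcirc)) :=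
      continuous_const.dotProduct (continuous_id.matrix_mulVec continuous_const)
    exact h2.continuousAt.comp hDinvCA
  have hrVCA : ContinuousAt rV 0 := by
    have h2 : Continuous fun M : Matrix (Fin m) (Fin m) ℝ => w ⬝ᵥ (M *ᵥ (Q *ᵥ Vcirc)) :=
      continuous_const.dotProduct (continuous_id.matrix_mulVec continuous_const)
    exact h2.continuousAt.comp hDinvCA
  set cT : ℝ := c⁻¹ * τ * ω with hcTdef
  set cV : ℝ := c⁻¹ * ν * ω with hcVdef
  have hcT : cT ≠ 0 := by
    rw [hcTdef]
    exact mul_ne_zero (mul_ne_zero (inv_ne_zero hvκ) hvT) hwκ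
  set den : ℝ → ℝ := fun ε => cT + ε * rT ε with hdendef
  have hdenCA : ContinuousAt den 0 := continuousAt_const.add (continuousAt_id.mul hrTCA)
  have hden0 : den 0 = cT := by rw [hdendef]; simp
  set f : ℝ → ℝ := fun ε => (ε * ((u - d) * L) - (cV + ε * rV ε)) / den ε with hfdef
  set g : ℝ → ℝ := fun ε => (((u - d) * L - rV ε) * τ + rT ε * ν) / den ε with hgdef
  set Δf : ℝ → (Fin m → ℝ) :=
    fun ε => (c⁻¹ * g ε) • κ + (D ε)⁻¹ *ᵥ (Q *ᵥ (f ε • Tcirc + Vcirc)) with hΔfdef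
  have hfCA : ContinuousAt f 0 := by
    apply ContinuousAt.div
    · exact (continuousAt_id.mul continuousAt_const).sub
        (continuousAt_const.add (continuousAt_id.mul hrVCA))
    · exact hdenCA
    · rw [hden0]; exact hcT
  have hgCA : ContinuousAt g 0 := by
    apply ContinuousAt.div
    · exact ((continuousAt_const.sub hrVCA).mul continuousAt_const).add
        (hrTCA.mul continuousAt_const)
    · exact hdenCA
    · rw [hden0]; exact hcT
  have hΔfCA : ContinuousAt Δf 0 := by
    apply ContinuousAt.add
    · exact (continuousAt_const.mul hgCA).smul continuousAt_const
    · have hmv : Continuous fun q : Matrix (Fin m) (Fin m) ℝ × (Fin m → ℝ) => q.1 *ᵥ q.2 :=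
        continuous_fst.matrix_mulVec continuous_snd
      have hQcont : Continuous fun z : Fin m → ℝ => Q *ᵥ z :=
        continuous_const.matrix_mulVec continuous_id
      have hvecCA : ContinuousAt (fun ε : ℝ => Q *ᵥ (f ε • Tcirc + Vcirc)) 0 :=
        hQcont.continuousAt.comp ((hfCA.smul continuousAt_const).add continuousAt_const)
      exact hmv.continuousAt.comp (hDinvCA.prodMk hvecCA)
  -- eventually-facts and choice of η
  have ev1 : ∀ᶠ ε : ℝ in 𝓝 0, (D ε).det ≠ 0 := hdetCont.continuousAt.eventually_ne hdet0ne
  have ev2 : ∀ᶠ ε : ℝ in 𝓝 0, den ε ≠ 0 := hdenCA.eventually_ne (by rw [hden0]; exact hcT)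
  have ev3 : ∀ᶠ ε : ℝ in 𝓝 0, |ε| < 1 := by
    have : Set.Ioo (-1 : ℝ) 1 ∈ 𝓝 (0:ℝ) := Ioo_mem_nhds (by norm_num) (by norm_num)
    exact Filter.eventually_of_mem this fun ε hε => abs_lt.mpr ⟨hε.1, hε.2⟩
  have hEV := (ev1.and ev2).and ev3
  rw [Metric.eventually_nhds_iff] at hEV
  obtain ⟨η, hη, hball⟩ := hEV
  have hball' : ∀ ε : ℝ, |ε| < η → (D ε).det ≠ 0 ∧ den ε ≠ 0 ∧ |ε| < 1 := by
    intro ε hε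
    have := hball (by rwa [Real.dist_eq, sub_zero] : dist ε (0:ℝ) < η)
    exact ⟨this.1.1, this.1.2, this.2⟩
  -- more matrix identities
  have hDP' : ∀ ε : ℝ, D ε * P = (1 + ε) • P := by
    intro ε
    show (B + P + ε • 1) * P = _
    rw [Matrix.add_mul, Matrix.add_mul, hBP, hPP,
      Matrix.smul_mul ε (1 : Matrix (Fin m) (Fin m) ℝ) P, Matrix.one_mul,
      zero_add, add_smul, one_smul]
  have hPQ : P * Q = 0 := by
    rw [hQdef, Matrix.mul_sub, Matrix.mul_one P, hPP, sub_self]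
  -- resolvent identity for small nonzero ε
  have hPDinv : ∀ ε : ℝ, (D ε).det ≠ 0 → (1 : ℝ) + ε ≠ 0 →
      P * (D ε)⁻¹ = (1 + ε)⁻¹ • P := by
    intro ε hDu h1ε
    have h1 := congrArg (fun M => M * (D ε)⁻¹) (hDP ε)
    rw [Matrix.mul_assoc, Matrix.mul_nonsing_inv _ (isUnit_iff_ne_zero.mpr hDu),
      Matrix.mul_one, Matrix.smul_mul] at h1
    rw [← inv_smul_eq_iff₀ h1ε] at h1
    exact h1.symm
  have hkey : ∀ ε : ℝ, ε ≠ 0 → (D ε).det ≠ 0 → (1 : ℝ) + ε ≠ 0 →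
      A ε * (ε⁻¹ • P + (D ε)⁻¹ * Q) = 1 := by
    intro ε hε0 hDu h1ε
    have hu' : IsUnit (D ε).det := isUnit_iff_ne_zero.mpr hDu
    have e1 : D ε * (ε⁻¹ • P) = (ε⁻¹ * (1 + ε)) • P := by
      rw [Matrix.mul_smul (D ε) ε⁻¹ P, hDP' ε, smul_smul]
    have e2 : D ε * ((D ε)⁻¹ * Q) = Q := by
      rw [← Matrix.mul_assoc, Matrix.mul_nonsing_inv _ hu', Matrix.one_mul]
    have e3 : P * (ε⁻¹ • P) = ε⁻¹ • P := by
      rw [Matrix.mul_smul P ε⁻¹ P, hPP]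
    have e4 : P * ((D ε)⁻¹ * Q) = 0 := by
      rw [← Matrix.mul_assoc, hPDinv ε hDu h1ε, Matrix.smul_mul (1 + ε)⁻¹ P Q, hPQ, smul_zero]
    rw [hADP ε, Matrix.sub_mul, Matrix.mul_add, Matrix.mul_add, e1, e2, e3, e4, add_zero]
    rw [show ε⁻¹ * (1 + ε) = 1 + ε⁻¹ from by field_simp; ring, add_smul, one_smul, hQdef]
    abel
  have hcc : cV * τ = cT * ν := by rw [hcTdef, hcVdef]; ring
  -- characterization of the perturbed solutions
  have hmaster : ∀ ε : ℝ, ε ≠ 0 → (D ε).det ≠ 0 → den ε ≠ 0 → (1:ℝ) + ε ≠ 0 →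
      IsUnit (A ε) ∧ w ⬝ᵥ ((A ε)⁻¹ *ᵥ Tcirc) ≠ 0 ∧
      ∀ q : ℝ × (Fin m → ℝ),
        (q.1 ∈ Set.Ioo (0:ℝ) 1 ∧ A ε *ᵥ q.2 = x q.1 • Tcirc + Vcirc ∧
          w ⬝ᵥ q.2 = (u - d) * L) ↔ q = (pf u d (f ε), Δf ε) := by
    intro ε hε0 hDu hden h1ε
    have hden' : cT + ε * rT ε ≠ 0 := hden
    have hu' : IsUnit (D ε).det := isUnit_iff_ne_zero.mpr hDu
    have hAdet : IsUnit (A ε).det := Matrix.isUnit_det_of_right_inverse (hkey ε hε0 hDu h1ε)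
    have hAu : IsUnit (A ε) := (Matrix.isUnit_iff_isUnit_det _).2 hAdet
    have hAinv : (A ε)⁻¹ = ε⁻¹ • P + (D ε)⁻¹ * Q :=
      Matrix.inv_eq_right_inv (hkey ε hε0 hDu h1ε)
    have hAv : ∀ y : Fin m → ℝ,
        (A ε)⁻¹ *ᵥ y = (ε⁻¹ * (c⁻¹ * (v ⬝ᵥ y))) • κ + (D ε)⁻¹ *ᵥ (Q *ᵥ y) := by
      intro y
      rw [hAinv, Matrix.add_mulVec, Matrix.smul_mulVec, hPv, smul_smul,
        ← Matrix.mulVec_mulVec]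
    have hWdot : ∀ y : Fin m → ℝ,
        w ⬝ᵥ ((A ε)⁻¹ *ᵥ y) = ε⁻¹ * (c⁻¹ * (v ⬝ᵥ y)) * ω + w ⬝ᵥ ((D ε)⁻¹ *ᵥ (Q *ᵥ y)) := by
      intro y
      rw [hAv y, dotProduct_add, dotProduct_smul, smul_eq_mul, ← hωdef]
    have hTval : w ⬝ᵥ ((A ε)⁻¹ *ᵥ Tcirc) = ε⁻¹ * den ε := by
      rw [hWdot Tcirc, ← hτdef, show w ⬝ᵥ ((D ε)⁻¹ *ᵥ (Q *ᵥ Tcirc)) = rT ε from rfl,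
        show den ε = cT + ε * rT ε from rfl, hcTdef]
      field_simp
    have hVval : w ⬝ᵥ ((A ε)⁻¹ *ᵥ Vcirc) = ε⁻¹ * cV + rV ε := by
      rw [hWdot Vcirc, ← hνdef, show w ⬝ᵥ ((D ε)⁻¹ *ᵥ (Q *ᵥ Vcirc)) = rV ε from rfl, hcVdef]
      ring
    have hTne : w ⬝ᵥ ((A ε)⁻¹ *ᵥ Tcirc) ≠ 0 := by
      rw [hTval]; exact mul_ne_zero (inv_ne_zero hε0) hden
    have hfgε : f ε * τ + ν = ε * g ε := by
      rw [show f ε = (ε * ((u - d) * L) - (cV + ε * rV ε)) / den ε from rfl,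
        show g ε = (((u - d) * L - rV ε) * τ + rT ε * ν) / den ε from rfl,
        show den ε = cT + ε * rT ε from rfl]
      field_simp
      linear_combination (ε * rT ε + cT) * hcc
    have hfval : f ε * (ε⁻¹ * den ε) + (ε⁻¹ * cV + rV ε) = (u - d) * L := by
      rw [show f ε = (ε * ((u - d) * L) - (cV + ε * rV ε)) / den ε from rfl]
      field_simp
      ring
    have hcand1 : pf u d (f ε) ∈ Set.Ioo (0:ℝ) 1 := pf_mem_Ioo u d _ hu hd
    have hxf : x (pf u d (f ε)) = f ε := x_pf u d (f ε) hu hd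
    have hΔfε : Δf ε = (A ε)⁻¹ *ᵥ (f ε • Tcirc + Vcirc) := by
      rw [hAv, show Δf ε = (c⁻¹ * g ε) • κ + (D ε)⁻¹ *ᵥ (Q *ᵥ (f ε • Tcirc + Vcirc)) from rfl]
      congr 2
      rw [dotProduct_add, dotProduct_smul, smul_eq_mul, ← hτdef, ← hνdef, hfgε]
      field_simp
    have hcand2 : A ε *ᵥ Δf ε = x (pf u d (f ε)) • Tcirc + Vcirc := by
      rw [hxf, hΔfε, Matrix.mulVec_mulVec, Matrix.mul_nonsing_inv _ hAdet, Matrix.one_mulVec]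
    have hdotΔ : ∀ t : ℝ, w ⬝ᵥ ((A ε)⁻¹ *ᵥ (t • Tcirc + Vcirc)) =
        t * (ε⁻¹ * den ε) + (ε⁻¹ * cV + rV ε) := by
      intro t
      rw [Matrix.mulVec_add, Matrix.mulVec_smul, dotProduct_add,
        dotProduct_smul, smul_eq_mul, hTval, hVval]
    have hcand3 : w ⬝ᵥ Δf ε = (u - d) * L := by
      rw [hΔfε, hdotΔ]
      exact hfval
    refine ⟨hAu, hTne, fun q => ⟨?_, ?_⟩⟩
    · rintro ⟨hq1, hq2, hq3⟩
      have hq2' : q.2 = (A ε)⁻¹ *ᵥ (x q.1 • Tcirc + Vcirc) := by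
        have h := congrArg (fun z => (A ε)⁻¹ *ᵥ z) hq2
        simpa [Matrix.mulVec_mulVec, Matrix.nonsing_inv_mul _ hAdet,
          Matrix.one_mulVec] using h
      have hxq : x q.1 = f ε := by
        have h1 : x q.1 * (ε⁻¹ * den ε) + (ε⁻¹ * cV + rV ε) = (u - d) * L := by
          rw [← hdotΔ, ← hq2']; exact hq3
        have h3 : (ε⁻¹ * den ε) ≠ 0 := mul_ne_zero (inv_ne_zero hε0) hden
        have h4 : x q.1 * (ε⁻¹ * den ε) = f ε * (ε⁻¹ * den ε) := by linarith
        exact mul_right_cancel₀ h3 h4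
      have hq1' : q.1 = pf u d (f ε) := by
        rw [← hxq]
        exact (pf_x u d q.1 hu hd hq1).symm
      have hq2'' : q.2 = Δf ε := by rw [hq2', hxq, hΔfε]
      exact Prod.ext hq1' hq2''
    · rintro rfl
      exact ⟨hcand1, hcand2, hcand3⟩
  -- the singular problem
  set xs : ℝ := (-ν) / τ with hxsdef
  set Δ0 : Fin m → ℝ := (D 0)⁻¹ *ᵥ (xs • Tcirc + Vcirc) with hΔ0def
  set tt : ℝ := ((u - d) * L - w ⬝ᵥ Δ0) / ω with httdef
  set Δs : Fin m → ℝ := Δ0 + tt • κ with hΔsdef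
  have hD0eq : D 0 = B + P := by
    show B + P + (0:ℝ) • 1 = B + P
    rw [zero_smul, add_zero]
  have hPD0inv : P * (D 0)⁻¹ = P := by
    have h := hPDinv 0 hdet0ne (by norm_num)
    simpa using h
  have hBD0 : B * (D 0)⁻¹ = Q := by
    rw [show B = D 0 - P from by rw [hD0eq]; abel, Matrix.sub_mul,
      Matrix.mul_nonsing_inv _ hdet0, hPD0inv, hQdef]
  have hD0invκ : (D 0)⁻¹ *ᵥ κ = κ := by
    have h := congrArg (fun z => (D 0)⁻¹ *ᵥ z) hD0κ
    simp only [Matrix.mulVec_mulVec, Matrix.nonsing_inv_mul _ hdet0, Matrix.one_mulVec] at h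
    exact h.symm
  have hvxs : v ⬝ᵥ (xs • Tcirc + Vcirc) = 0 := by
    rw [dotProduct_add, dotProduct_smul, smul_eq_mul, ← hτdef, ← hνdef, hxsdef]
    field_simp
    ring
  have hQxs : Q *ᵥ (xs • Tcirc + Vcirc) = xs • Tcirc + Vcirc := by
    rw [hQdef, Matrix.sub_mulVec, Matrix.one_mulVec, hPv, hvxs, mul_zero, zero_smul, sub_zero]
  have hBΔ0 : B *ᵥ Δ0 = xs • Tcirc + Vcirc := by
    rw [hΔ0def, Matrix.mulVec_mulVec, hBD0, hQxs]
  have hBΔs : B *ᵥ Δs = xs • Tcirc + Vcirc := by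
    rw [hΔsdef, Matrix.mulVec_add, hBΔ0, Matrix.mulVec_smul, hκA, smul_zero, add_zero]
  have hwΔs : w ⬝ᵥ Δs = (u - d) * L := by
    rw [hΔsdef, dotProduct_add, dotProduct_smul, smul_eq_mul, ← hωdef,
      httdef, div_mul_cancel₀ _ hwκ]
    ring
  have hxps : x (pf u d xs) = xs := x_pf u d xs hu hd
  have hsing : ∀ q : ℝ × (Fin m → ℝ),
      (q.1 ∈ Set.Ioo (0:ℝ) 1 ∧ B *ᵥ q.2 = x q.1 • Tcirc + Vcirc ∧
        w ⬝ᵥ q.2 = (u - d) * L) ↔ q = (pf u d xs, Δs) := by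
    intro q
    constructor
    · rintro ⟨hq1, hq2, hq3⟩
      have h0 : 0 = x q.1 * τ + ν := by
        have h := congrArg (fun z => v ⬝ᵥ z) hq2
        simp only [Matrix.dotProduct_mulVec, hvB, zero_dotProduct,
          dotProduct_add, dotProduct_smul, smul_eq_mul] at h
        rw [← hτdef, ← hνdef] at h
        exact h
      have hxq : x q.1 = xs := by
        rw [hxsdef]
        rw [eq_div_iff hvT]
        linarith
      have hq1' : q.1 = pf u d xs := by
        rw [← hxq]
        exact (pf_x u d q.1 hu hd hq1).symm
      have hq2' : q.2 = Δs := by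
        have hsub : B *ᵥ (q.2 - Δs) = 0 := by
          rw [Matrix.mulVec_sub, hq2, hxq, hBΔs, sub_self]
        obtain ⟨a, ha⟩ := hmemκ _ hsub
        have hwsub : w ⬝ᵥ (q.2 - Δs) = 0 := by
          rw [dotProduct_sub, hq3, hwΔs, sub_self]
        rw [ha, dotProduct_smul, smul_eq_mul, ← hωdef] at hwsub
        have ha0 : a = 0 := by
          rcases mul_eq_zero.mp hwsub with h | h
          · exact h
          · exact absurd h hwκ
        rw [ha0, zero_smul] at ha
        exact sub_eq_zero.mp ha
      exact Prod.ext hq1' hq2'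
    · rintro rfl
      refine ⟨pf_mem_Ioo u d xs hu hd, ?_, hwΔs⟩
      rw [hxps, hBΔs]
  -- values at ε = 0
  have hf0 : f 0 = xs := by
    rw [show f 0 = (0 * ((u - d) * L) - (cV + 0 * rV 0)) / den 0 from rfl, hden0,
      hcVdef, hcTdef, hxsdef]
    rw [zero_mul, zero_mul, zero_sub, add_zero]
    rw [div_eq_div_iff (mul_ne_zero (mul_ne_zero (inv_ne_zero hvκ) hvT) hwκ) hvT]
    ring
  set sT : ℝ := w ⬝ᵥ ((D 0)⁻¹ *ᵥ Tcirc) with hsTdef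
  set sV : ℝ := w ⬝ᵥ ((D 0)⁻¹ *ᵥ Vcirc) with hsVdef
  have hrT0 : rT 0 = sT - c⁻¹ * τ * ω := by
    rw [show rT 0 = w ⬝ᵥ ((D 0)⁻¹ *ᵥ (Q *ᵥ Tcirc)) from rfl, hQdef, Matrix.sub_mulVec,
      Matrix.one_mulVec, hPv, ← hτdef, Matrix.mulVec_sub, Matrix.mulVec_smul, hD0invκ,
      dotProduct_sub, dotProduct_smul, smul_eq_mul, ← hωdef, ← hsTdef]
  have hrV0 : rV 0 = sV - c⁻¹ * ν * ω := by
    rw [show rV 0 = w ⬝ᵥ ((D 0)⁻¹ *ᵥ (Q *ᵥ Vcirc)) from rfl, hQdef, Matrix.sub_mulVec,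
      Matrix.one_mulVec, hPv, ← hνdef, Matrix.mulVec_sub, Matrix.mulVec_smul, hD0invκ,
      dotProduct_sub, dotProduct_smul, smul_eq_mul, ← hωdef, ← hsVdef]
  have hwΔ0 : w ⬝ᵥ Δ0 = xs * sT + sV := by
    rw [hΔ0def, Matrix.mulVec_add, Matrix.mulVec_smul, dotProduct_add,
      dotProduct_smul, smul_eq_mul, ← hsTdef, ← hsVdef]
  have hg0 : c⁻¹ * g 0 = tt := by
    rw [show g 0 = (((u - d) * L - rV 0) * τ + rT 0 * ν) / den 0 from rfl, hden0,
      httdef, hwΔ0, hrT0, hrV0, hcTdef, hxsdef]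
    field_simp
    ring
  have hΔf0 : Δf 0 = Δs := by
    rw [show Δf 0 = (c⁻¹ * g 0) • κ + (D 0)⁻¹ *ᵥ (Q *ᵥ (f 0 • Tcirc + Vcirc)) from rfl,
      hf0, hQxs, ← hΔ0def, hg0, hΔsdef]
    abel
  -- final assembly
  refine ⟨η, hη, ?_, ?_, ?_⟩
  · intro ε hε0abs hεη
    obtain ⟨h1, h2, h3⟩ := hball' ε hεη
    have hε0 : ε ≠ 0 := abs_pos.mp hε0abs
    have h1ε : (1:ℝ) + ε ≠ 0 := by
      rcases abs_lt.mp h3 with ⟨hl, hr⟩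
      intro hc
      linarith
    obtain ⟨hAu, hTne, hiff⟩ := hmaster ε hε0 h1 h2 h1ε
    exact ⟨hAu, hTne, ⟨(pf u d (f ε), Δf ε), (hiff _).2 rfl, fun q hq => (hiff q).1 hq⟩⟩
  · exact ⟨(pf u d xs, Δs), (hsing _).2 rfl, fun q hq => (hsing q).1 hq⟩
  · intro p Δ hpΔ pstar Δstar hps hBs hws
    have hqs : (pstar, Δstar) = (pf u d xs, Δs) := (hsing (pstar, Δstar)).1 ⟨hps, hBs, hws⟩
    have hps' : pstar = pf u d xs := congrArg Prod.fst hqs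
    have hΔs' : Δstar = Δs := congrArg Prod.snd hqs
    have heq : ∀ᶠ ε in 𝓝[≠] (0:ℝ), p ε = pf u d (f ε) ∧ Δ ε = Δf ε := by
      have hball_mem : Metric.ball (0:ℝ) η ∈ 𝓝[≠] (0:ℝ) :=
        nhdsWithin_le_nhds (Metric.ball_mem_nhds _ hη)
      filter_upwards [hball_mem, self_mem_nhdsWithin] with ε hb hne
      have hεη : |ε| < η := by simpa [Real.dist_eq] using hb
      have hε0 : ε ≠ 0 := hne
      obtain ⟨h1, h2, h3⟩ := hball' ε hεη
      have h1ε : (1:ℝ) + ε ≠ 0 := by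
        rcases abs_lt.mp h3 with ⟨hl, hr⟩
        intro hc
        linarith
      obtain ⟨-, -, hiff⟩ := hmaster ε hε0 h1 h2 h1ε
      have hq := (hiff (p ε, Δ ε)).1 (hpΔ ε (abs_pos.mpr hε0) hεη)
      exact ⟨congrArg Prod.fst hq, congrArg Prod.snd hq⟩
    constructor
    · have hT1 : Tendsto (fun ε => pf u d (f ε)) (𝓝 0) (𝓝 (pf u d xs)) := by
        have h : Tendsto (fun ε => pf u d (f ε)) (𝓝 0) (𝓝 (pf u d (f 0))) :=
          ((pf_continuous u d hu hd).continuousAt).comp hfCA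
        rw [hf0] at h
        exact h
      rw [hps']
      exact (hT1.mono_left nhdsWithin_le_nhds).congr' (heq.mono fun ε h => h.1.symm)
    · have hT2 : Tendsto Δf (𝓝 0) (𝓝 Δs) := by
        have h := hΔfCA
        rw [ContinuousAt, hΔf0] at h
        exact h
      rw [hΔs']
      exact (hT2.mono_left nhdsWithin_le_nhds).congr' (heq.mono fun ε h => h.2.symm)
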